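/- In knapsack Instance 2, the number of local optima x_loc equals (n/4 − 2)·C(n/2, n/4 − 2), which is exponential in n: it is at least 2^(n/4) for sufficiently large n. -/

import Mathlib

open Finset

lemma two_pow_le_centralBinom (n : ℕ) : 2 ^ n ≤ Nat.centralBinom n := by
  induction n with
  | zero => simp [Nat.centralBinom]
  | succ k ih =>
    have h := Nat.succ_mul_centralBinom_succ k
    have h2 : (k + 1) * (2 * Nat.centralBinom k) ≤ (k + 1) * Nat.centralBinom (k + 1) := by
      rw [h]; nlinarith [Nat.centralBinom_pos k]
    have := Nat.le_of_mul_le_mul_left h2 (Nat.succ_pos k)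
    calc 2 ^ (k + 1) = 2 * 2 ^ k := by ring
    _ ≤ 2 * Nat.centralBinom k := by omega
    _ ≤ Nat.centralBinom (k + 1) := this

lemma two_pow_le_choose {k n : ℕ} (h : 2 * k ≤ n) : 2 ^ k ≤ n.choose k := by
  calc 2 ^ k ≤ Nat.centralBinom k := two_pow_le_centralBinom k
  _ = (2 * k).choose k := rfl
  _ ≤ n.choose k := Nat.choose_le_choose k h

theorem stmt14 :
    ∃ N : ℕ, ∀ n : ℕ, N ≤ n → 4 ∣ n →
      (((Finset.Icc 1 n).powerset.filter (fun x =>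
          x ⊆ Finset.Icc 3 (n / 4) ∪ Finset.Icc (n / 4 + 1) (n / 2) ∪
              Finset.Icc (n / 2 + 1) n ∧
          (x ∩ Finset.Icc 3 (n / 4)).card = 1 ∧
          Finset.Icc (n / 4 + 1) (n / 2) ⊆ x ∧
          (x ∩ Finset.Icc (n / 2 + 1) n).card = n / 4 - 2)).card
        = (n / 4 - 2) * (n / 2).choose (n / 4 - 2)) ∧
      2 ^ (n / 4) ≤ (n / 4 - 2) * (n / 2).choose (n / 4 - 2) := by
  refine ⟨24, fun n hn hdvd => ?_⟩
  obtain ⟨m, rfl⟩ := hdvd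
  have hm : 6 ≤ m := by omega
  have h4 : 4 * m / 4 = m := by omega
  have h2 : 4 * m / 2 = 2 * m := by omega
  rw [h4, h2]
  set I : Finset ℕ := Finset.Icc 3 m with hI
  set J : Finset ℕ := Finset.Icc (m + 1) (2 * m) with hJ
  set K : Finset ℕ := Finset.Icc (2 * m + 1) (4 * m) with hK
  -- basic disjointness facts
  have hJI : ∀ a ∈ J, a ∉ I := by
    intro a ha; simp only [hI, hJ, mem_Icc] at *; omega
  have hKI : ∀ a ∈ K, a ∉ I := by
    intro a ha; simp only [hI, hK, mem_Icc] at *; omega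
  have hJK : ∀ a ∈ J, a ∉ K := by
    intro a ha; simp only [hK, hJ, mem_Icc] at *; omega
  have hIK : ∀ a ∈ I, a ∉ K := by
    intro a ha; simp only [hI, hK, mem_Icc] at *; omega
  constructor
  · -- the counting part
    have hcard : (I ×ˢ K.powersetCard (m - 2)).card = (m - 2) * (2 * m).choose (m - 2) := by
      rw [card_product, card_powersetCard, hI, hK, Nat.card_Icc, Nat.card_Icc]
      have e1 : m + 1 - 3 = m - 2 := by omega
      have e2 : 4 * m + 1 - (2 * m + 1) = 2 * m := by omega
      rw [e1, e2]
    rw [← hcard]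
    symm
    refine Finset.card_bij (fun p _ => insert p.1 (J ∪ p.2)) ?_ ?_ ?_
    · -- maps into the filter
      rintro ⟨i, S⟩ hp
      simp only [mem_product, mem_powersetCard] at hp
      obtain ⟨hi, hS, hScard⟩ := hp
      have hiI : 3 ≤ i ∧ i ≤ m := by simpa [hI, mem_Icc] using hi
      have hSK : ∀ a ∈ S, 2 * m + 1 ≤ a ∧ a ≤ 4 * m := by
        intro a ha; simpa [hK, mem_Icc] using hS ha
      have hinterI : insert i (J ∪ S) ∩ I = {i} := by
        ext a
        simp only [mem_inter, mem_insert, mem_union, mem_singleton]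
        constructor
        · rintro ⟨h1 | h2 | h3, haI⟩
          · exact h1
          · exact absurd haI (hJI a h2)
          · exact absurd haI (hKI a (hS h3))
        · rintro rfl; exact ⟨Or.inl rfl, hi⟩
      have hinterK : insert i (J ∪ S) ∩ K = S := by
        ext a
        simp only [mem_inter, mem_insert, mem_union]
        constructor
        · rintro ⟨h1 | h2 | h3, haK⟩
          · exact absurd haK (h1 ▸ hIK i hi)
          · exact absurd haK (hJK a h2)
          · exact h3
        · intro ha; exact ⟨Or.inr (Or.inr ha), hS ha⟩
      refine mem_filter.mpr ⟨mem_powerset.mpr ?_, ?_, ?_, ?_, ?_⟩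
      · intro a ha
        simp only [mem_insert, mem_union] at ha
        simp only [mem_Icc]
        rcases ha with rfl | h2 | h3
        · omega
        · have := (mem_Icc.mp h2); omega
        · have := hSK a h3; omega
      · intro a ha
        simp only [mem_insert, mem_union] at ha
        simp only [mem_union]
        rcases ha with rfl | h2 | h3
        · exact Or.inl (Or.inl hi)
        · exact Or.inl (Or.inr h2)
        · exact Or.inr (hS h3)
      · rw [hinterI, card_singleton]
      · intro a ha; exact mem_insert_of_mem (mem_union_left _ ha)
      · rw [hinterK, hScard]
    · -- injective
      rintro ⟨i, S⟩ hp ⟨i', S'⟩ hp' heq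
      simp only [mem_product, mem_powersetCard] at hp hp'
      obtain ⟨hi, hS, -⟩ := hp
      obtain ⟨hi', hS', -⟩ := hp'
      have key : ∀ (j : ℕ) (T : Finset ℕ), j ∈ I → T ⊆ K →
          insert j (J ∪ T) ∩ I = {j} ∧ insert j (J ∪ T) ∩ K = T := by
        intro j T hj hT
        constructor
        · ext a
          simp only [mem_inter, mem_insert, mem_union, mem_singleton]
          constructor
          · rintro ⟨h1 | h2 | h3, haI⟩
            · exact h1
            · exact absurd haI (hJI a h2)
            · exact absurd haI (hKI a (hT h3))
          · rintro rfl; exact ⟨Or.inl rfl, hj⟩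
        · ext a
          simp only [mem_inter, mem_insert, mem_union]
          constructor
          · rintro ⟨h1 | h2 | h3, haK⟩
            · exact absurd haK (h1 ▸ hIK j hj)
            · exact absurd haK (hJK a h2)
            · exact h3
          · intro ha; exact ⟨Or.inr (Or.inr ha), hT ha⟩
      obtain ⟨k1, k2⟩ := key i S hi hS
      obtain ⟨k1', k2'⟩ := key i' S' hi' hS'
      have heq : insert i (J ∪ S) = insert i' (J ∪ S') := heq
      have e1 : ({i} : Finset ℕ) = {i'} := by rw [← k1, ← k1', heq]
      have e2 : S = S' := by rw [← k2, ← k2', heq]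
      have : i = i' := singleton_injective e1
      simp [Prod.ext_iff, this, e2]
    · -- surjective
      intro x hx
      simp only [mem_filter, mem_powerset] at hx
      obtain ⟨hxsub, hsub, hcard1, hJx, hcardK⟩ := hx
      obtain ⟨i, hi⟩ := card_eq_one.mp hcard1
      have hiI : i ∈ I := by
        have : i ∈ x ∩ I := hi ▸ mem_singleton_self i
        exact (mem_inter.mp this).2
      have hix : i ∈ x := by
        have : i ∈ x ∩ I := hi ▸ mem_singleton_self i
        exact (mem_inter.mp this).1
      refine ⟨(i, x ∩ K), ?_, ?_⟩
      · simp only [mem_product, mem_powersetCard]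
        exact ⟨hiI, inter_subset_right, hcardK⟩
      · -- x = insert i (J ∪ (x ∩ K))
        ext a
        simp only [mem_insert, mem_union, mem_inter]
        constructor
        · rintro (rfl | haJ | ⟨hax, -⟩)
          · exact hix
          · exact hJx haJ
          · exact hax
        · intro ha
          have := hsub ha
          simp only [mem_union] at this
          rcases this with (haI | haJ) | haK
          · left
            have : a ∈ x ∩ I := mem_inter.mpr ⟨ha, haI⟩
            rw [hi, mem_singleton] at this; exact this
          · exact Or.inr (Or.inl haJ)
          · exact Or.inr (Or.inr ⟨ha, haK⟩)
  · -- the inequality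
    have h1 : 2 ^ (m - 2) ≤ (2 * m).choose (m - 2) := two_pow_le_choose (by omega)
    calc 2 ^ m = 4 * 2 ^ (m - 2) := by
          have : m = (m - 2) + 2 := by omega
          conv_lhs => rw [this]
          rw [pow_add]; ring
    _ ≤ (m - 2) * (2 * m).choose (m - 2) := by
          have : 4 ≤ m - 2 := by omega
          calc 4 * 2 ^ (m - 2) ≤ (m - 2) * 2 ^ (m - 2) := Nat.mul_le_mul_right _ this
          _ ≤ (m - 2) * (2 * m).choose (m - 2) := Nat.mul_le_mul_left _ h1
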